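/- Let p be a prime, n ≥ 1, and consider ℝ^{n+1} with coordinates indexed by {0,1,...,n}. For partitions λ, μ of size at most n, set λ̂ = (-|λ|, λ_1,...,λ_n) and ρ_n(δ) = (δ,-1,...,-n) for δ ∈ ℤ. Then μ̂ + ρ_n(δ) ∼_p λ̂ + ρ_n(δ) (equal up to permutation of coordinates mod p) if and only if μ̂ lies in the orbit of λ̂ under the ρ_n(δ)-shifted action of the affine reflection group generated by the reflections s_{i,j,rp}(x) = x - (⟨x, ε_i - ε_j⟩ - rp)(ε_i - ε_j) for 0 ≤ i < j ≤ n and r ∈ ℤ. -/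

import Mathlib

def IsPartWithin (n : ℕ) (f : ℕ → ℕ) : Prop :=
  (∀ i j, i ≤ j → f j ≤ f i) ∧ ∀ i, n ≤ i → f i = 0

def psize (n : ℕ) (f : ℕ → ℕ) : ℕ := ∑ i ∈ Finset.range n, f i

/-- the integral `(n+1)`-tuple `f̂ + ρ_n(δ) = (δ - |f|, f_1 - 1, …, f_n - n)`,
coordinates indexed by `{0,1,…,n}`. -/
def hatRhoZ (n : ℕ) (δ : ℤ) (f : ℕ → ℕ) : Fin (n + 1) → ℤ :=
  fun m => if (m : ℕ) = 0 then δ - (psize n f : ℤ)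
    else (f ((m : ℕ) - 1) : ℤ) - ((m : ℕ) : ℤ)

lemma sum_hatRhoZ (n : ℕ) (δ : ℤ) (f : ℕ → ℕ) :
    ∑ m, hatRhoZ n δ f m = δ - ∑ i : Fin n, ((i : ℤ) + 1) := by
  rw [Fin.sum_univ_succ]
  have h0 : hatRhoZ n δ f 0 = δ - (psize n f : ℤ) := by simp [hatRhoZ]
  have hs : ∀ i : Fin n, hatRhoZ n δ f i.succ = (f i : ℤ) - ((i : ℤ) + 1) := by
    intro i
    simp [hatRhoZ, Fin.val_succ]
  rw [h0, Finset.sum_congr rfl fun i _ => hs i, Finset.sum_sub_distrib]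
  have : (psize n f : ℤ) = ∑ i : Fin n, (f i : ℤ) := by
    rw [psize]
    push_cast
    exact (Fin.sum_univ_eq_sum_range _ n).symm
  rw [this]; ring

/-- Theorem 8.9 reformulation: `μ̂ + ρ_n(δ) ∼_p λ̂ + ρ_n(δ)` (equal up
to a permutation of the coordinates `{0,…,n}`, modulo `p`) iff `μ̂` lies in the orbit
of `λ̂` under the `ρ_n(δ)`-shifted action of the affine reflection group `Ŵ_n^p`
generated by the reflections `s_{i,j,rp}`.  An element of this group is a coordinate
permutation followed by a translation by `p` times an element of the type `A_n` root
lattice, i.e. `p` times an integer vector with coordinate sum `0`. -/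
theorem sim_p_iff_affine_orbit_hat (p : ℕ) [Fact p.Prime] (n : ℕ) (hn : 1 ≤ n) (δ : ℤ)
    (lam mu : ℕ → ℕ) (hlam : IsPartWithin n lam) (hmu : IsPartWithin n mu)
    (hlsz : psize n lam ≤ n) (hmsz : psize n mu ≤ n) :
    (∃ σ : Equiv.Perm (Fin (n + 1)), ∀ m,
        ((hatRhoZ n δ mu m : ℤ) : ZMod p) = ((hatRhoZ n δ lam (σ m) : ℤ) : ZMod p)) ↔
    (∃ σ : Equiv.Perm (Fin (n + 1)), ∃ t : Fin (n + 1) → ℤ, (∑ m, t m) = 0 ∧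
        ∀ m, hatRhoZ n δ mu m = hatRhoZ n δ lam (σ m) + p * t m) := by
  have hp : (p : ℤ) ≠ 0 := by
    exact_mod_cast (Fact.out : p.Prime).ne_zero
  constructor
  · rintro ⟨σ, hσ⟩
    have hdvd : ∀ m, (p : ℤ) ∣ (hatRhoZ n δ mu m - hatRhoZ n δ lam (σ m)) := by
      intro m
      have := hσ m
      rwa [← sub_eq_zero, ← Int.cast_sub, ZMod.intCast_zmod_eq_zero_iff_dvd] at this
    refine ⟨σ, fun m => (hatRhoZ n δ mu m - hatRhoZ n δ lam (σ m)) / p, ?_, ?_⟩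
    · have hsum : ∑ m, (hatRhoZ n δ mu m - hatRhoZ n δ lam (σ m)) = 0 := by
        rw [Finset.sum_sub_distrib, sum_hatRhoZ,
          Equiv.sum_comp σ (hatRhoZ n δ lam), sum_hatRhoZ, sub_self]
      have hps : (p : ℤ) * ∑ m, (hatRhoZ n δ mu m - hatRhoZ n δ lam (σ m)) / p = 0 := by
        rw [Finset.mul_sum]
        rw [Finset.sum_congr rfl fun m _ => Int.mul_ediv_cancel' (hdvd m), hsum]
      rcases mul_eq_zero.mp hps with h | h
      · exact absurd h hp
      · exact h
    · intro m
      rw [Int.mul_ediv_cancel' (hdvd m)]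
      ring
  · rintro ⟨σ, t, ht, h⟩
    refine ⟨σ, fun m => ?_⟩
    rw [h m]
    push_cast
    simp
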